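/- arXiv:2306.14288 — 4 statements merged into one kernel-verified Lean document; each statement's English description precedes it below -/
import Mathlib

section
/- Let ζ_1,…,ζ_n be i.i.d. N(0, 1), let σ > 0 and λ > 0, and let p₀ = erfc(1/√2) = P(ζ₁² ≥ 1). Then P(Σ_{i=1}^n σ²ζ_i²/(λ + σ²ζ_i²) ≥ n σ² p₀/(2(σ² + λ))) ≥ 1 − e^{−n p₀/8}. -/
open MeasureTheory ProbabilityTheory Real Matrix
open scoped ENNReal NNReal BigOperators RealInnerProductSpace

noncomputable section

/-- `p₀ = erfc(1/√2)`, the probability that a standard Gaussian has absolute value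
at least `1`. -/
def gaussTailOne : ℝ := ((gaussianReal 0 1) {x : ℝ | 1 ≤ x ^ 2}).toReal

lemma hA_meas : MeasurableSet {x : ℝ | 1 ≤ x ^ 2} :=
  measurableSet_le measurable_const (measurable_id.pow_const 2)

lemma gaussTailOne_nonneg : 0 ≤ gaussTailOne := ENNReal.toReal_nonneg

lemma gaussTailOne_le_one : gaussTailOne ≤ 1 := by
  rw [gaussTailOne]
  have := prob_le_one (μ := gaussianReal 0 1) (s := {x : ℝ | 1 ≤ x ^ 2})
  simpa using ENNReal.toReal_mono ENNReal.one_ne_top this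

/-- **Lemma (Tail bound for rational functions of χ² random variables, I).**
For `ζ₁, …, ζₙ` i.i.d. `N(0,1)`, `σ > 0` and `λ > 0`,
`P(Σᵢ σ²ζᵢ²/(λ + σ²ζᵢ²) ≥ nσ²p₀/(2(σ² + λ))) ≥ 1 - e^{-np₀/8}` with `p₀ = erfc(1/√2)`. -/
theorem chisq_rational_tail_I
    {Ω : Type} [MeasurableSpace Ω] (μ : Measure Ω) [IsProbabilityMeasure μ]
    (n : ℕ) (ζ : Fin n → Ω → ℝ)
    (hMeas : ∀ i, Measurable (ζ i))
    (hDist : ∀ i, Measure.map (ζ i) μ = gaussianReal 0 1)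
    (hIndep : iIndepFun ζ μ)
    (σ lam : ℝ) (hσ : 0 < σ) (hlam : 0 < lam) :
    ENNReal.ofReal (1 - Real.exp (-((n : ℝ) * gaussTailOne) / 8)) ≤
      μ {ω | (n : ℝ) * σ ^ 2 * gaussTailOne / (2 * (σ ^ 2 + lam)) ≤
        ∑ i, σ ^ 2 * ζ i ω ^ 2 / (lam + σ ^ 2 * ζ i ω ^ 2)} := by
  classical
  set A : Set ℝ := {x : ℝ | 1 ≤ x ^ 2} with hA_def
  set p : ℝ := gaussTailOne with hp_def
  have hp0 : 0 ≤ p := gaussTailOne_nonneg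
  have hp1 : p ≤ 1 := gaussTailOne_le_one
  -- indicator random variables
  set Y : Fin n → Ω → ℝ := fun i ω => A.indicator (fun _ => (1:ℝ)) (ζ i ω) with hY_def
  have hYmeas : ∀ i, Measurable (Y i) := fun i =>
    (measurable_const.indicator hA_meas).comp (hMeas i)
  have hYindep : iIndepFun Y μ :=
    hIndep.comp (fun _ => A.indicator (fun _ => (1:ℝ)))
      (fun _ => measurable_const.indicator hA_meas)
  have hY01 : ∀ i ω, 0 ≤ Y i ω ∧ Y i ω ≤ 1 := by
    intro i ω
    simp only [hY_def, Set.indicator]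
    split <;> norm_num
  set t : ℝ := -Real.log 2 with ht_def
  have ht_neg : t ≤ 0 := neg_nonpos.mpr (Real.log_nonneg one_le_two)
  -- mgf of each Y i
  have hmgf : ∀ i, mgf (Y i) μ t = 1 - p / 2 := by
    intro i
    have h1 : mgf (Y i) μ t = ∫ x, Real.exp (t * A.indicator (fun _ => (1:ℝ)) x)
        ∂(gaussianReal 0 1) := by
      rw [mgf, ← hDist i, integral_map (hMeas i).aemeasurable]
      exact ((measurable_const.indicator hA_meas).const_mul t).exp.aestronglyMeasurable
    have h2 : (fun x => Real.exp (t * A.indicator (fun _ => (1:ℝ)) x)) =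
        fun x => A.indicator (fun _ => Real.exp t - 1) x + 1 := by
      funext x
      by_cases hx : x ∈ A <;> simp [Set.indicator, hx]
    rw [h1, h2, integral_add ((integrable_const _).indicator hA_meas) (integrable_const 1),
      integral_indicator_const _ hA_meas, integral_const]
    have hexp_t : Real.exp t = 1 / 2 := by
      rw [ht_def, Real.exp_neg, Real.exp_log two_pos]; norm_num
    simp only [Measure.real, measure_univ, ENNReal.toReal_one, smul_eq_mul, one_mul, hexp_t]
    rw [hp_def, gaussTailOne]
    ring
  -- sum
  set S : Ω → ℝ := fun ω => ∑ i, Y i ω with hS_def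
  have hSmeas : Measurable S := Finset.measurable_sum _ fun i _ => hYmeas i
  have hS_apply : (∑ i, Y i) = S := by funext ω; simp [hS_def]
  have hS_nonneg : ∀ ω, 0 ≤ S ω := fun ω =>
    Finset.sum_nonneg fun i _ => (hY01 i ω).1
  have h_int : Integrable (fun ω => Real.exp (t * S ω)) μ := by
    refine Integrable.mono' (integrable_const 1)
      ((hSmeas.const_mul t).exp.aestronglyMeasurable) (ae_of_all _ fun ω => ?_)
    rw [Real.norm_eq_abs, abs_of_pos (Real.exp_pos _)]
    exact Real.exp_le_one_iff.mpr (mul_nonpos_of_nonpos_of_nonneg ht_neg (hS_nonneg ω))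
  have hmgfS : mgf S μ t = (1 - p / 2) ^ n := by
    rw [← hS_apply, hYindep.mgf_sum hYmeas]
    simp [hmgf]
  -- Chernoff
  have hchern := measure_le_le_exp_mul_mgf (X := S) (μ := μ) (t := t)
    ((n : ℝ) * p / 2) ht_neg h_int
  rw [hmgfS] at hchern
  have hbound : Real.exp (-t * ((n : ℝ) * p / 2)) * (1 - p / 2) ^ n ≤
      Real.exp (-((n : ℝ) * p) / 8) := by
    have h1 : (1 - p / 2 : ℝ) ^ n ≤ Real.exp (-(p / 2)) ^ n := by
      apply pow_le_pow_left₀ (by linarith)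
      linarith [Real.add_one_le_exp (-(p / 2))]
    have h2 : Real.exp (-t * ((n : ℝ) * p / 2)) * (1 - p / 2) ^ n ≤
        Real.exp (-t * ((n : ℝ) * p / 2)) * Real.exp (-(p / 2)) ^ n :=
      mul_le_mul_of_nonneg_left h1 (Real.exp_pos _).le
    refine h2.trans ?_
    rw [← Real.exp_nat_mul, ← Real.exp_add, Real.exp_le_exp]
    have hlog : Real.log 2 ≤ 3 / 4 := by
      have := Real.log_two_lt_d9
      linarith
    have hnp : 0 ≤ (n : ℝ) * p := mul_nonneg (Nat.cast_nonneg n) hp0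
    have : -t * ((n : ℝ) * p / 2) + (n : ℝ) * (-(p / 2)) =
        ((n : ℝ) * p) * (Real.log 2 - 1) / 2 := by rw [ht_def]; ring
    rw [this]
    rw [div_le_div_iff₀ (by norm_num) (by norm_num)] at *
    nlinarith
  have hchern' : μ {ω | S ω ≤ (n : ℝ) * p / 2} ≤
      ENNReal.ofReal (Real.exp (-((n : ℝ) * p) / 8)) := by
    rw [← ENNReal.ofReal_toReal (measure_ne_top μ _)]
    exact ENNReal.ofReal_le_ofReal (hchern.trans hbound)
  -- pointwise containment
  set B : Set Ω := {ω | (n : ℝ) * p / 2 ≤ S ω} with hB_def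
  have hsub : B ⊆ {ω | (n : ℝ) * σ ^ 2 * gaussTailOne / (2 * (σ ^ 2 + lam)) ≤
      ∑ i, σ ^ 2 * ζ i ω ^ 2 / (lam + σ ^ 2 * ζ i ω ^ 2)} := by
    intro ω hω
    simp only [Set.mem_setOf_eq] at hω ⊢
    have hden : 0 < σ ^ 2 + lam := by positivity
    have hterm : ∀ i, σ ^ 2 / (σ ^ 2 + lam) * Y i ω ≤
        σ ^ 2 * ζ i ω ^ 2 / (lam + σ ^ 2 * ζ i ω ^ 2) := by
      intro i
      have hden2 : 0 < lam + σ ^ 2 * ζ i ω ^ 2 := by positivity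
      by_cases hx : ζ i ω ∈ A
      · have hx1 : 1 ≤ ζ i ω ^ 2 := hx
        simp only [hY_def, Set.indicator_of_mem hx, mul_one]
        rw [div_le_div_iff₀ hden hden2]
        nlinarith [mul_nonneg (mul_nonneg (sq_nonneg σ) hlam.le) (sub_nonneg.mpr hx1)]
      · simp only [hY_def, Set.indicator_of_notMem hx, mul_zero]
        positivity
    calc (n : ℝ) * σ ^ 2 * gaussTailOne / (2 * (σ ^ 2 + lam))
        = σ ^ 2 / (σ ^ 2 + lam) * ((n : ℝ) * p / 2) := by
          rw [hp_def]; field_simp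
      _ ≤ σ ^ 2 / (σ ^ 2 + lam) * S ω := by
          apply mul_le_mul_of_nonneg_left hω; positivity
      _ = ∑ i, σ ^ 2 / (σ ^ 2 + lam) * Y i ω := by rw [hS_def, Finset.mul_sum]
      _ ≤ _ := Finset.sum_le_sum fun i _ => hterm i
  refine le_trans ?_ (measure_mono hsub)
  -- complement bound
  have hcompl : Bᶜ ⊆ {ω | S ω ≤ (n : ℝ) * p / 2} := by
    intro ω hω
    simp only [hB_def, Set.mem_compl_iff, Set.mem_setOf_eq, not_le] at hω ⊢
    exact hω.le
  have h1 : (1 : ℝ≥0∞) ≤ μ B + μ Bᶜ := by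
    rw [← measure_univ (μ := μ), ← Set.union_compl_self B]
    exact measure_union_le _ _
  have h2 : μ Bᶜ ≤ ENNReal.ofReal (Real.exp (-((n : ℝ) * p) / 8)) :=
    (measure_mono hcompl).trans hchern'
  have h3 : (1 : ℝ≥0∞) - ENNReal.ofReal (Real.exp (-((n : ℝ) * p) / 8)) ≤ μ B := by
    refine le_trans (tsub_le_tsub_left h2 1) ?_
    exact tsub_le_iff_right.mpr h1
  refine le_trans ?_ h3
  rw [← ENNReal.ofReal_one, ← ENNReal.ofReal_sub _ (Real.exp_pos _).le]
end
end

section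
/- Let γ_1,…,γ_n, ζ_1,…,ζ_n be 2n i.i.d. N(0, 1) random variables, let σ > 0, and let 0 < λ ≤ σ². Then with p₀ = erfc(1/√2), P(Σ_{i=1}^n ζ_i²/(λ + σ²γ_i²) ≥ n p₀/(16 σ √λ)) ≥ 1 − exp(−n p₀ √λ/(32 σ)). -/
open MeasureTheory ProbabilityTheory Real Matrix
open scoped ENNReal NNReal BigOperators RealInnerProductSpace

noncomputable section

lemma aux_pdf_const_le : (1:ℝ)/8 ≤ (Real.sqrt (2 * π * (1:ℝ≥0)))⁻¹ * rexp (-(1:ℝ)/2) := by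
  have h2 : Real.sqrt (2 * π * (1:ℝ≥0)) ≤ 3 := by
    rw [show ((2:ℝ) * π * (1:ℝ≥0)) = 2 * π by push_cast; ring]
    rw [show (3:ℝ) = Real.sqrt 9 by rw [show (9:ℝ) = 3^2 by norm_num, Real.sqrt_sq]; norm_num]
    exact Real.sqrt_le_sqrt (by nlinarith [Real.pi_le_four])
  have h3 : rexp (-(1:ℝ)/2) ≥ 3/8 := by
    rw [show (-(1:ℝ)/2) = -(1/2) by ring, Real.exp_neg, ge_iff_le, le_inv_comm₀ (by norm_num) (Real.exp_pos _)]
    have hsq : rexp (1/2) * rexp (1/2) = rexp 1 := by rw [← Real.exp_add]; norm_num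
    nlinarith [Real.exp_one_lt_d9, Real.exp_pos (1/2:ℝ)]
  have hpos : (0:ℝ) < Real.sqrt (2 * π * (1:ℝ≥0)) := by
    apply Real.sqrt_pos.2
    have := Real.pi_pos
    push_cast
    nlinarith
  rw [inv_mul_eq_div, le_div_iff₀ hpos]
  nlinarith

lemma aux_gauss_icc {t : ℝ} (ht0 : 0 < t) (ht1 : t ≤ 1) :
    t/4 ≤ ((gaussianReal 0 1) (Set.Icc (-t) t)).toReal := by
  rw [gaussianReal_apply_eq_integral 0 one_ne_zero]
  set c : ℝ := (Real.sqrt (2 * π * (1:ℝ≥0)))⁻¹ * rexp (-(1:ℝ)/2) with hc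
  have hint : IntegrableOn (gaussianPDFReal 0 1) (Set.Icc (-t) t) volume :=
    (integrable_gaussianPDFReal 0 1).integrableOn
  have hlb : ∀ x ∈ Set.Icc (-t) t, c ≤ gaussianPDFReal 0 1 x := by
    rintro x ⟨h1, h2⟩
    rw [gaussianPDFReal, hc]
    have hexp : rexp (-(1:ℝ)/2) ≤ rexp (-(x-0)^2/(2*(1:ℝ≥0))) := by
      apply Real.exp_le_exp.2
      push_cast
      nlinarith
    exact mul_le_mul_of_nonneg_left hexp (by positivity)
  have hge := setIntegral_ge_of_const_le measurableSet_Icc (by simp) hlb hint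
  have hvol : (volume (Set.Icc (-t) t)).toReal = 2 * t := by
    rw [Real.volume_Icc]
    rw [ENNReal.toReal_ofReal (by linarith)]
    ring
  rw [measureReal_def, hvol, smul_eq_mul] at hge
  have hc8 : (1:ℝ)/8 ≤ c := aux_pdf_const_le
  have : t/4 ≤ ∫ x in Set.Icc (-t) t, gaussianPDFReal 0 1 x := by nlinarith
  rw [ENNReal.toReal_ofReal (by linarith)]
  exact this

set_option maxHeartbeats 1000000 in

/-- **Lemma (Tail bound for rational functions of χ² random variables, II).**
For `γ₁, …, γₙ, ζ₁, …, ζₙ` i.i.d. `N(0,1)` (2n independent standard Gaussians),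
`σ > 0` and `0 < λ ≤ σ²`,
`P(Σᵢ ζᵢ²/(λ + σ²γᵢ²) ≥ np₀/(16σ√λ)) ≥ 1 - exp(-np₀√λ/(32σ))` with `p₀ = erfc(1/√2)`. -/
theorem chisq_rational_tail_II
    {Ω : Type} [MeasurableSpace Ω] (μ : Measure Ω) [IsProbabilityMeasure μ]
    (n : ℕ) (γ ζ : Fin n → Ω → ℝ)
    (hMeas : ∀ i, Measurable (Sum.elim γ ζ i))
    (hDist : ∀ i, Measure.map (Sum.elim γ ζ i) μ = gaussianReal 0 1)
    (hIndep : iIndepFun (Sum.elim γ ζ) μ)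
    (σ lam : ℝ) (hσ : 0 < σ) (hlam0 : 0 < lam) (hlam : lam ≤ σ ^ 2) :
    ENNReal.ofReal (1 - Real.exp (-((n : ℝ) * gaussTailOne * Real.sqrt lam) / (32 * σ))) ≤
      μ {ω | (n : ℝ) * gaussTailOne / (16 * σ * Real.sqrt lam) ≤
        ∑ i, ζ i ω ^ 2 / (lam + σ ^ 2 * γ i ω ^ 2)} := by
  classical
  set t : ℝ := Real.sqrt lam / σ with ht_def
  have hsqrt_pos : 0 < Real.sqrt lam := Real.sqrt_pos.2 hlam0
  have ht0 : 0 < t := by positivity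
  have ht1 : t ≤ 1 := by
    rw [ht_def, div_le_one hσ]
    calc Real.sqrt lam ≤ Real.sqrt (σ^2) := Real.sqrt_le_sqrt hlam
      _ = σ := Real.sqrt_sq hσ.le
  set G : Set ℝ := Set.Icc (-t) t with hG_def
  set H : Set ℝ := {x : ℝ | 1 ≤ x ^ 2} with hH_def
  have hGm : MeasurableSet G := measurableSet_Icc
  have hHm : MeasurableSet H := measurableSet_le measurable_const (measurable_id.pow_const 2)
  have hγm : ∀ i, Measurable (γ i) := fun i => hMeas (Sum.inl i)
  have hζm : ∀ i, Measurable (ζ i) := fun i => hMeas (Sum.inr i)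
  set A : Fin n → Set Ω := fun i => γ i ⁻¹' G ∩ ζ i ⁻¹' H with hA_def
  have hAm : ∀ i, MeasurableSet (A i) := fun i => ((hγm i) hGm).inter ((hζm i) hHm)
  set q : ℝ := ((gaussianReal 0 1) G).toReal with hq_def
  set p : ℝ := q * gaussTailOne with hp_def
  -- distributional facts
  have hγG : ∀ i, μ (γ i ⁻¹' G) = gaussianReal 0 1 G := by
    intro i
    rw [← hDist (Sum.inl i), Measure.map_apply (hMeas (Sum.inl i)) hGm]
    rfl
  have hζH : ∀ i, μ (ζ i ⁻¹' H) = gaussianReal 0 1 H := by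
    intro i
    rw [← hDist (Sum.inr i), Measure.map_apply (hMeas (Sum.inr i)) hHm]
    rfl
  have hq0 : 0 ≤ q := ENNReal.toReal_nonneg
  have hq1 : q ≤ 1 := by
    rw [hq_def]
    exact ENNReal.toReal_le_of_le_ofReal one_pos.le (by simpa using prob_le_one)
  have hp00 : 0 ≤ gaussTailOne := ENNReal.toReal_nonneg
  have hp01 : gaussTailOne ≤ 1 :=
    ENNReal.toReal_le_of_le_ofReal one_pos.le (by simpa [gaussTailOne] using prob_le_one)
  have hp0 : 0 ≤ p := mul_nonneg hq0 hp00
  have hp1 : p ≤ 1 := by nlinarith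
  have hqt : t / 4 ≤ q := aux_gauss_icc ht0 ht1
  have hplb : gaussTailOne * Real.sqrt lam / (4 * σ) ≤ p := by
    rw [hp_def]
    have : t / 4 * gaussTailOne ≤ q * gaussTailOne := by
      apply mul_le_mul_of_nonneg_right hqt hp00
    calc gaussTailOne * Real.sqrt lam / (4 * σ) = t / 4 * gaussTailOne := by
          rw [ht_def]; ring
      _ ≤ q * gaussTailOne := this
  -- each A i has measure p
  have hAprod : ∀ i, μ (A i) = μ (γ i ⁻¹' G) * μ (ζ i ⁻¹' H) := by
    intro i
    have hind : IndepFun (γ i) (ζ i) μ :=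
      hIndep.indepFun (show (Sum.inl i : Fin n ⊕ Fin n) ≠ Sum.inr i by simp)
    exact hind.measure_inter_preimage_eq_mul G H hGm hHm
  have hAp : ∀ i, μ (A i) = ENNReal.ofReal p := by
    intro i
    rw [hAprod i, hγG i, hζH i, hp_def, ENNReal.ofReal_mul hq0, hq_def,
      ENNReal.ofReal_toReal (measure_ne_top _ _), gaussTailOne,
      ENNReal.ofReal_toReal (measure_ne_top _ _)]
  -- independence of the events
  have hAset : iIndepSet A μ := by
    rw [iIndepSet_iff_meas_biInter hAm]
    intro s
    set S : Finset (Fin n ⊕ Fin n) := s.image Sum.inl ∪ s.image Sum.inr with hS_def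
    have hkey := hIndep.measure_inter_preimage_eq_mul (S := S)
      (sets := Sum.elim (fun _ => G) (fun _ => H)) ?_
    · have hLHS : (⋂ j ∈ S, Sum.elim γ ζ j ⁻¹' Sum.elim (fun _ => G) (fun _ => H) j)
          = ⋂ i ∈ s, A i := by
        ext ω
        simp only [Set.mem_iInter, hS_def, Finset.mem_union, Finset.mem_image, hA_def,
          Set.mem_inter_iff, Set.mem_preimage]
        constructor
        · intro h i hi
          exact ⟨h (Sum.inl i) (Or.inl ⟨i, hi, rfl⟩), h (Sum.inr i) (Or.inr ⟨i, hi, rfl⟩)⟩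
        · rintro h j (⟨i, hi, rfl⟩ | ⟨i, hi, rfl⟩)
          · exact (h i hi).1
          · exact (h i hi).2
      have hdisj : Disjoint (s.image Sum.inl) (s.image Sum.inr) := by
        rw [Finset.disjoint_left]
        intro a ha hb
        simp only [Finset.mem_image] at ha hb
        obtain ⟨i, _, rfl⟩ := ha
        obtain ⟨j, _, h⟩ := hb
        exact Sum.inl_ne_inr h.symm
      have hRHS : (∏ j ∈ S, μ (Sum.elim γ ζ j ⁻¹' Sum.elim (fun _ => G) (fun _ => H) j))
          = ∏ i ∈ s, μ (A i) := by
        rw [hS_def, Finset.prod_union hdisj,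
          Finset.prod_image (fun x _ y _ h => Sum.inl.inj h),
          Finset.prod_image (fun x _ y _ h => Sum.inr.inj h),
          ← Finset.prod_mul_distrib]
        exact Finset.prod_congr rfl fun i _ => (hAprod i).symm
      rw [hLHS, hRHS] at hkey
      exact hkey
    · rintro (j | j) _
      · exact hGm
      · exact hHm
  set Y : Fin n → Ω → ℝ := fun i => (A i).indicator (fun _ => 1) with hY_def
  have hYind : iIndepFun Y μ := hAset.iIndepFun_indicator
  have hYm : ∀ i, Measurable (Y i) := fun i => measurable_const.indicator (hAm i)
  have hY0 : ∀ i ω, 0 ≤ Y i ω := fun i ω => Set.indicator_nonneg (fun _ _ => zero_le_one) ω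
  -- mgf of each indicator
  have hmgf : ∀ i, mgf (Y i) μ (-Real.log 2) = 1 - p / 2 := by
    intro i
    have hfe : (fun ω => rexp (-Real.log 2 * Y i ω))
        = fun ω => (A i).indicator (fun _ => rexp (-Real.log 2) - 1) ω + 1 := by
      funext ω
      by_cases hω : ω ∈ A i
      · simp [hY_def, Set.indicator_of_mem hω]
      · simp [hY_def, Set.indicator_of_notMem hω]
    have h2 : rexp (-Real.log 2) = 1 / 2 := by
      rw [Real.exp_neg, Real.exp_log two_pos]; norm_num
    rw [mgf, hfe, integral_add ((integrable_const _).indicator (hAm i)) (integrable_const 1),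
      integral_indicator_const _ (hAm i), integral_const, measureReal_def, hAp i,
      ENNReal.toReal_ofReal hp0, h2]
    simp
    ring
  -- Chernoff bound
  set Z : Ω → ℝ := ∑ i, Y i with hZ_def
  have hZm : Measurable Z := by
    rw [hZ_def, Finset.sum_fn]
    exact Finset.measurable_sum Finset.univ fun i _ => hYm i
  have hZ0 : ∀ ω, 0 ≤ Z ω := by
    intro ω
    rw [hZ_def, Finset.sum_apply]
    exact Finset.sum_nonneg fun i _ => hY0 i ω
  have hint : Integrable (fun ω => rexp (-Real.log 2 * Z ω)) μ := by
    apply Integrable.mono' (integrable_const 1)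
    · exact ((hZm.const_mul _).exp).aestronglyMeasurable
    · apply Filter.Eventually.of_forall
      intro ω
      rw [Real.norm_eq_abs, abs_of_pos (Real.exp_pos _), ← Real.exp_zero]
      apply Real.exp_le_exp.2
      have := hZ0 ω
      have hl2 : 0 < Real.log 2 := Real.log_pos one_lt_two
      nlinarith
  have hcher := measure_le_le_exp_mul_mgf (μ := μ) (X := Z) (t := -Real.log 2)
    ((n : ℝ) * p / 2) (by simp [Real.log_nonneg one_le_two]) hint
  have hmgfZ : mgf Z μ (-Real.log 2) = (1 - p / 2) ^ n := by
    rw [hZ_def, hYind.mgf_sum hYm]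
    simp [hmgf]
  rw [hmgfZ] at hcher
  -- bound the Chernoff rhs
  have hln2 : Real.log 2 < 0.6931471808 := Real.log_two_lt_d9
  have hln2' : 0 < Real.log 2 := Real.log_pos one_lt_two
  have hbound : rexp (- -Real.log 2 * ((n:ℝ) * p / 2)) * (1 - p / 2) ^ n
      ≤ rexp (-((n : ℝ) * gaussTailOne * Real.sqrt lam) / (32 * σ)) := by
    have h1 : (1 - p / 2) ^ n ≤ rexp (-(p/2)) ^ n := by
      apply pow_le_pow_left₀ (by linarith)
      linarith [Real.add_one_le_exp (-(p/2))]
    have h2 : rexp (-(p/2)) ^ n = rexp ((n:ℝ) * (-(p/2))) := by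
      rw [← Real.exp_nat_mul]
    calc rexp (- -Real.log 2 * ((n:ℝ) * p / 2)) * (1 - p / 2) ^ n
        ≤ rexp (- -Real.log 2 * ((n:ℝ) * p / 2)) * rexp ((n:ℝ) * (-(p/2))) := by
          rw [← h2]; exact mul_le_mul_of_nonneg_left h1 (Real.exp_pos _).le
      _ = rexp (Real.log 2 * ((n:ℝ) * p / 2) + (n:ℝ) * (-(p/2))) := by
          rw [← Real.exp_add]; ring_nf
      _ ≤ rexp (-((n : ℝ) * gaussTailOne * Real.sqrt lam) / (32 * σ)) := by
          apply Real.exp_le_exp.2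
          rw [div_le_iff₀ (by positivity)] at hplb
          have hn0 : (0:ℝ) ≤ (n:ℝ) := Nat.cast_nonneg n
          have hnp : 0 ≤ (n:ℝ) * p := mul_nonneg hn0 hp0
          have hq32 : (n:ℝ) * gaussTailOne * Real.sqrt lam / (32 * σ) ≤ (n:ℝ) * p / 8 := by
            rw [div_le_div_iff₀ (by positivity) (by norm_num)]
            nlinarith [mul_le_mul_of_nonneg_left hplb hn0]
          rw [neg_div]
          nlinarith [hq32, hnp, hln2]
  -- event inclusion
  set S : Set Ω := {ω | (n:ℝ) * p / 2 ≤ Z ω} with hS_def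
  have hSm : MeasurableSet S := measurableSet_le measurable_const hZm
  have hsub : S ⊆ {ω | (n : ℝ) * gaussTailOne / (16 * σ * Real.sqrt lam) ≤
      ∑ i, ζ i ω ^ 2 / (lam + σ ^ 2 * γ i ω ^ 2)} := by
    intro ω hω
    simp only [Set.mem_setOf_eq] at hω ⊢
    have hterm : ∀ i, Y i ω / (2 * lam) ≤ ζ i ω ^ 2 / (lam + σ ^ 2 * γ i ω ^ 2) := by
      intro i
      by_cases hA : ω ∈ A i
      · obtain ⟨hγA, hζA⟩ := id hA
        simp only [Set.mem_preimage, hG_def, Set.mem_Icc] at hγA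
        simp only [Set.mem_preimage, hH_def, Set.mem_setOf_eq] at hζA
        have hY1 : Y i ω = 1 := Set.indicator_of_mem hA _
        rw [hY1]
        have hdenpos : 0 < lam + σ ^ 2 * γ i ω ^ 2 := by positivity
        have hγ2 : σ ^ 2 * γ i ω ^ 2 ≤ lam := by
          have h1 : γ i ω ^ 2 ≤ t ^ 2 := by nlinarith [hγA.1, hγA.2]
          have h2 : σ ^ 2 * t ^ 2 = lam := by
            rw [ht_def, div_pow, Real.sq_sqrt hlam0.le]
            field_simp
          nlinarith [sq_nonneg σ]
        rw [div_le_div_iff₀ (by positivity) hdenpos]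
        nlinarith
      · have hY0' : Y i ω = 0 := Set.indicator_of_notMem hA _
        rw [hY0', zero_div]
        positivity
    have hsum : Z ω / (2 * lam) ≤ ∑ i, ζ i ω ^ 2 / (lam + σ ^ 2 * γ i ω ^ 2) := by
      rw [hZ_def, Finset.sum_apply, Finset.sum_div]
      exact Finset.sum_le_sum fun i _ => hterm i
    have hω' : (n:ℝ) * p / 2 ≤ Z ω := by
      simpa only [hS_def, Set.mem_setOf_eq] using hω
    have hZbound : (n:ℝ) * p / 2 / (2 * lam) ≤ Z ω / (2 * lam) := by
      gcongr
    have hthr : (n : ℝ) * gaussTailOne / (16 * σ * Real.sqrt lam) ≤ (n:ℝ) * p / 2 / (2 * lam) := by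
      have hsq : Real.sqrt lam * Real.sqrt lam = lam := Real.mul_self_sqrt hlam0.le
      have hn0 : (0:ℝ) ≤ (n:ℝ) := Nat.cast_nonneg n
      rw [div_le_div_iff₀ (by positivity) (by positivity)]
      rw [div_le_iff₀ (by positivity)] at hplb
      have key : (n:ℝ) * gaussTailOne * lam ≤ (n:ℝ) * p * (4 * σ) * Real.sqrt lam := by
        calc (n:ℝ) * gaussTailOne * lam
            = (n:ℝ) * Real.sqrt lam * (gaussTailOne * Real.sqrt lam) := by
              linear_combination (-((n:ℝ) * gaussTailOne)) * hsq
          _ ≤ (n:ℝ) * Real.sqrt lam * (p * (4 * σ)) :=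
              mul_le_mul_of_nonneg_left hplb (by positivity)
          _ = (n:ℝ) * p * (4 * σ) * Real.sqrt lam := by ring
      nlinarith [key]
    linarith
  -- assembly
  have hTbound : (μ {ω | Z ω ≤ (n:ℝ) * p / 2}).toReal
      ≤ rexp (-((n : ℝ) * gaussTailOne * Real.sqrt lam) / (32 * σ)) := le_trans hcher hbound
  have hScompl : Sᶜ ⊆ {ω | Z ω ≤ (n:ℝ) * p / 2} := by
    intro ω hω
    simp only [hS_def, Set.mem_compl_iff, Set.mem_setOf_eq, not_le] at hω
    exact le_of_lt hω
  have h1 : (μ Sᶜ).toReal ≤ rexp (-((n : ℝ) * gaussTailOne * Real.sqrt lam) / (32 * σ)) :=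
    le_trans (ENNReal.toReal_mono (measure_ne_top _ _) (measure_mono hScompl)) hTbound
  have hadd : (μ S).toReal + (μ Sᶜ).toReal = 1 := by
    rw [← ENNReal.toReal_add (measure_ne_top _ _) (measure_ne_top _ _),
      measure_add_measure_compl hSm, measure_univ, ENNReal.toReal_one]
  refine le_trans ?_ (measure_mono hsub)
  rw [← ENNReal.ofReal_toReal (measure_ne_top μ S)]
  apply ENNReal.ofReal_le_ofReal
  linarith

end
end

section
/- Let γ_1,…,γ_n, ζ_1,…,ζ_n be 2n i.i.d. N(0, 1) random variables, and let σ > 0, λ > 0, A ≥ 0. Then P(Σ_{i=1}^n σ γ_i ζ_i/(λ + σ²γ_i²) ≥ −n√(2A)/λ^{1/4}) ≥ 1 − e^{−A n √λ}. -/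
open MeasureTheory ProbabilityTheory Real Matrix
open scoped ENNReal NNReal BigOperators RealInnerProductSpace

set_option maxHeartbeats 1000000

noncomputable section

lemma grt_cexp_eq (c : ℝ) (x : ℝ) : Complex.exp (-(1/2 : ℂ) * (x:ℂ)^2 + (c:ℂ)*x + 0)
    = ((rexp (-(x^2)/2 + c*x) : ℝ) : ℂ) := by
  rw [Complex.ofReal_exp]
  push_cast
  ring_nf

lemma grt_integrable_exp_quadratic (c : ℝ) :
    Integrable (fun x : ℝ => rexp (-(x ^ 2) / 2 + c * x)) := by
  have h := integrable_cexp_quadratic' (b := -(1/2 : ℂ)) (by norm_num) (c : ℂ) 0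
  have h2 : Integrable (fun x : ℝ => ((rexp (-(x^2)/2 + c*x) : ℝ) : ℂ)) :=
    h.congr (Filter.Eventually.of_forall (grt_cexp_eq c))
  have h3 : Integrable (fun x : ℝ => (((rexp (-(x^2)/2 + c*x) : ℝ) : ℂ)).re) := h2.re
  exact h3.congr (Filter.Eventually.of_forall fun x => Complex.ofReal_re _)

lemma grt_integral_exp_quadratic (c : ℝ) :
    ∫ x : ℝ, rexp (-(x ^ 2) / 2 + c * x) = Real.sqrt (2 * π) * rexp (c ^ 2 / 2) := by
  have h2π : (0:ℝ) ≤ 2 * π := by positivity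
  have h0 : ∫ x : ℝ, ((rexp (-(x^2)/2 + c*x) : ℝ) : ℂ)
      = ((∫ x : ℝ, rexp (-(x ^ 2) / 2 + c * x) : ℝ) : ℂ) := integral_ofReal
  have key : ((∫ x : ℝ, rexp (-(x ^ 2) / 2 + c * x) : ℝ) : ℂ)
      = ((Real.sqrt (2 * π) * rexp (c ^ 2 / 2) : ℝ) : ℂ) := by
    calc ((∫ x : ℝ, rexp (-(x ^ 2) / 2 + c * x) : ℝ) : ℂ)
        = ∫ x : ℝ, Complex.exp (-(1/2 : ℂ) * (x:ℂ) ^ 2 + (c:ℂ) * x + 0) := by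
          rw [← h0]
          exact integral_congr_ae (Filter.Eventually.of_forall fun x => (grt_cexp_eq c x).symm)
      _ = (↑π / -(-(1/2 : ℂ))) ^ (1/2 : ℂ) * Complex.exp (0 - (c:ℂ)^2 / (4 * -(1/2 : ℂ))) :=
          integral_cexp_quadratic (by norm_num) _ _
      _ = ((Real.sqrt (2 * π) * rexp (c ^ 2 / 2) : ℝ) : ℂ) := by
          have e1 : (↑π / -(-(1/2 : ℂ))) = ((2*π : ℝ) : ℂ) := by push_cast; ring
          have e2 : (0 - (c:ℂ)^2 / (4 * -(1/2 : ℂ))) = ((c^2/2 : ℝ) : ℂ) := by push_cast; ring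
          rw [e1, e2, ← Complex.ofReal_exp,
            show (1/2 : ℂ) = ((1/2 : ℝ) : ℂ) by norm_num,
            ← Complex.ofReal_cpow h2π, ← Complex.ofReal_mul]
          norm_num [Real.sqrt_eq_rpow]
  exact_mod_cast key

lemma grt_pdf_smul (c : ℝ) (x : ℝ) : (gaussianPDFReal 0 1 x).toNNReal • rexp (c * x)
    = (Real.sqrt (2*π))⁻¹ * rexp (-(x^2)/2 + c * x) := by
  have hnn := gaussianPDFReal_nonneg 0 1 x
  rw [NNReal.smul_def, smul_eq_mul, Real.coe_toNNReal _ hnn, gaussianPDFReal_def]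
  push_cast
  rw [mul_assoc, ← Real.exp_add]
  ring_nf

lemma grt_integrable_exp_mul_gaussian (c : ℝ) :
    Integrable (fun x => rexp (c * x)) (gaussianReal 0 1) := by
  rw [gaussianReal_of_var_ne_zero 0 one_ne_zero]
  have hmeas : Measurable fun x : ℝ => (gaussianPDFReal 0 1 x).toNNReal :=
    (measurable_gaussianPDFReal 0 1).real_toNNReal
  have hwd : (volume.withDensity (gaussianPDF 0 1))
      = volume.withDensity (fun x => ((gaussianPDFReal 0 1 x).toNNReal : ℝ≥0∞)) := rfl
  rw [hwd, integrable_withDensity_iff_integrable_smul hmeas]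
  refine ((grt_integrable_exp_quadratic c).const_mul ((Real.sqrt (2*π))⁻¹)).congr
    (Filter.Eventually.of_forall fun x => (grt_pdf_smul c x).symm)

lemma grt_integral_exp_mul_gaussian (c : ℝ) :
    ∫ x, rexp (c * x) ∂(gaussianReal 0 1) = rexp (c ^ 2 / 2) := by
  rw [gaussianReal_of_var_ne_zero 0 one_ne_zero]
  have hmeas : Measurable fun x : ℝ => (gaussianPDFReal 0 1 x).toNNReal :=
    (measurable_gaussianPDFReal 0 1).real_toNNReal
  have hwd : (volume.withDensity (gaussianPDF 0 1))
      = volume.withDensity (fun x => ((gaussianPDFReal 0 1 x).toNNReal : ℝ≥0∞)) := rfl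
  rw [hwd, integral_withDensity_eq_integral_smul hmeas]
  rw [integral_congr_ae (Filter.Eventually.of_forall (grt_pdf_smul c)), integral_const_mul,
    grt_integral_exp_quadratic c]
  have h : Real.sqrt (2*π) ≠ 0 := by positivity
  field_simp

lemma grt_integral_pi_prod {n : ℕ} (m : Measure ℝ) [IsProbabilityMeasure m] (f : Fin n → ℝ → ℝ) :
    ∫ x : Fin n → ℝ, ∏ i, f i (x i) ∂(Measure.pi fun _ => m) = ∏ i, ∫ y, f i y ∂m := by
  letI : MeasureSpace ℝ := ⟨m⟩
  exact integral_fintype_prod_eq_prod (ι := Fin n) f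

lemma grt_integrable_pi_prod {n : ℕ} (m : Measure ℝ) [IsProbabilityMeasure m] (f : Fin n → ℝ → ℝ)
    (hf : ∀ i, Integrable (f i) m) :
    Integrable (fun x : Fin n → ℝ => ∏ i, f i (x i)) (Measure.pi fun _ => m) := by
  letI : MeasureSpace ℝ := ⟨m⟩
  exact Integrable.fintype_prod hf

lemma grt_integral_le_const {α : Type*} [MeasurableSpace α] (m : Measure α) [IsProbabilityMeasure m]
    (f : α → ℝ) (C : ℝ) (hC : 0 ≤ C) (h : ∀ a, f a ≤ C) : ∫ a, f a ∂m ≤ C := by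
  by_cases hf : Integrable f m
  · calc ∫ a, f a ∂m ≤ ∫ _, C ∂m := integral_mono hf (integrable_const C) h
      _ = C := by simp
  · rw [integral_undef hf]; exact hC

/-- **Lemma (Tail bound for rational functions of Gaussian random variables).**
For `γ₁, …, γₙ, ζ₁, …, ζₙ` i.i.d. `N(0,1)` (2n independent standard Gaussians),
any `σ > 0`, `λ > 0` and `A ≥ 0`,
`P(Σᵢ σγᵢζᵢ/(λ + σ²γᵢ²) ≥ -n√(2A)/λ^{1/4}) ≥ 1 - e^{-An√λ}`. -/
theorem gaussian_rational_tail
    {Ω : Type} [MeasurableSpace Ω] (μ : Measure Ω) [IsProbabilityMeasure μ]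
    (n : ℕ) (γ ζ : Fin n → Ω → ℝ)
    (hMeas : ∀ i, Measurable (Sum.elim γ ζ i))
    (hDist : ∀ i, Measure.map (Sum.elim γ ζ i) μ = gaussianReal 0 1)
    (hIndep : iIndepFun (Sum.elim γ ζ) μ)
    (σ lam A : ℝ) (hσ : 0 < σ) (hlam : 0 < lam) (hA : 0 ≤ A) :
    ENNReal.ofReal (1 - Real.exp (-(A * (n : ℝ) * Real.sqrt lam))) ≤
      μ {ω | -((n : ℝ) * Real.sqrt (2 * A) / lam ^ ((1 : ℝ) / 4)) ≤
        ∑ i, σ * γ i ω * ζ i ω / (lam + σ ^ 2 * γ i ω ^ 2)} := by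
  classical
  have hγmeas : ∀ i, Measurable (γ i) := fun i => hMeas (.inl i)
  have hζmeas : ∀ i, Measurable (ζ i) := fun i => hMeas (.inr i)
  set g : Measure ℝ := gaussianReal 0 1 with hgdef
  set r : ℝ := lam ^ ((1:ℝ)/4) with hrdef
  have hr : 0 < r := Real.rpow_pos_of_pos hlam _
  have hr2 : r^2 = Real.sqrt lam := by
    rw [hrdef, ← Real.rpow_natCast (lam ^ ((1:ℝ)/4)) 2, ← Real.rpow_mul hlam.le,
      Real.sqrt_eq_rpow]
    norm_num
  have hr4 : r^4 = lam := by
    rw [hrdef, ← Real.rpow_natCast (lam ^ ((1:ℝ)/4)) 4, ← Real.rpow_mul hlam.le]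
    norm_num
  set q : ℝ := Real.sqrt (2*A) with hqdef
  have hq0 : 0 ≤ q := Real.sqrt_nonneg _
  have hq2 : q^2 = 2*A := Real.sq_sqrt (by linarith)
  set t : ℝ := (n : ℝ) * q / r with htdef
  set s : ℝ := 4 * q * r^3 with hsdef
  have hs0 : 0 ≤ s := by positivity
  -- square bound
  have hc2 : ∀ x : ℝ, (σ * x / (lam + σ^2 * x^2))^2 ≤ 1/(4*lam) := by
    intro x
    have hD : 0 < lam + σ^2*x^2 := by positivity
    rw [div_pow, div_le_div_iff₀ (by positivity) (by positivity)]
    nlinarith [sq_nonneg (lam - σ^2*x^2)]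
  have hKsq : (1/(2*Real.sqrt lam))^2 = 1/(4*lam) := by
    rw [div_pow, mul_pow, Real.sq_sqrt hlam.le]
    norm_num
  have habs : ∀ x : ℝ, |σ*x/(lam + σ^2*x^2)| ≤ 1/(2*Real.sqrt lam) := by
    intro x
    calc |σ*x/(lam + σ^2*x^2)| = Real.sqrt ((σ*x/(lam + σ^2*x^2))^2) :=
          (Real.sqrt_sq_eq_abs _).symm
      _ ≤ Real.sqrt (1/(4*lam)) := Real.sqrt_le_sqrt (hc2 x)
      _ = 1/(2*Real.sqrt lam) := by
          rw [← hKsq, Real.sqrt_sq (by positivity)]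
  -- the product space
  set pm : Measure (Fin n → ℝ) := Measure.pi (fun _ => g) with hpmdef
  haveI : IsProbabilityMeasure g := by rw [hgdef]; infer_instance
  haveI : IsProbabilityMeasure pm := by rw [hpmdef]; infer_instance
  set P : Measure ((Fin n → ℝ) × (Fin n → ℝ)) := pm.prod pm with hPdef
  haveI : IsProbabilityMeasure P := by rw [hPdef]; infer_instance
  set F : (Fin n → ℝ) × (Fin n → ℝ) → ℝ :=
    fun p => ∑ i, σ * p.1 i * p.2 i / (lam + σ^2 * p.1 i ^ 2) with hFdef
  have hFmeas : Measurable F := by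
    apply Finset.measurable_sum
    intro i _
    exact ((measurable_const.mul ((measurable_fst.eval))).mul (measurable_snd.eval)).div
      (measurable_const.add (measurable_const.mul ((measurable_fst.eval).pow measurable_const)))
  -- step A : joint law
  have hT : Measurable (fun ω (i : Fin n ⊕ Fin n) => Sum.elim γ ζ i ω) :=
    measurable_pi_lambda _ hMeas
  have hmapT : Measure.map (fun ω (i : Fin n ⊕ Fin n) => Sum.elim γ ζ i ω) μ
      = Measure.pi (fun _ => g) := by
    refine (Measure.pi_eq fun sets hsets => ?_).symm
    rw [Measure.map_apply hT (MeasurableSet.univ_pi hsets)]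
    have hpre : (fun ω (i : Fin n ⊕ Fin n) => Sum.elim γ ζ i ω) ⁻¹' (Set.pi Set.univ sets)
        = ⋂ i, (Sum.elim γ ζ i) ⁻¹' (sets i) := by
      ext ω
      simp [Set.mem_univ_pi]
    rw [hpre, hIndep.meas_iInter (fun i => ⟨sets i, hsets i, rfl⟩)]
    exact Finset.prod_congr rfl fun i _ => by
      rw [← hDist i, Measure.map_apply (hMeas i) (hsets i)]
  set T' : Ω → (Fin n → ℝ) × (Fin n → ℝ) := fun ω => (fun i => γ i ω, fun i => ζ i ω)
    with hT'def
  have hT'meas : Measurable T' :=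
    Measurable.prod (measurable_pi_lambda _ hγmeas) (measurable_pi_lambda _ hζmeas)
  have hmapT' : Measure.map T' μ = P := by
    have hco : T' = (MeasurableEquiv.sumPiEquivProdPi (fun _ : Fin n ⊕ Fin n => ℝ))
        ∘ (fun ω i => Sum.elim γ ζ i ω) := rfl
    rw [hco, ← Measure.map_map (MeasurableEquiv.measurable _) hT, hmapT,
      (measurePreserving_sumPiEquivProdPi (fun _ : Fin n ⊕ Fin n => g)).map_eq]
  -- step B : transfer
  have hset : MeasurableSet {p : (Fin n → ℝ) × (Fin n → ℝ) | -t ≤ F p} :=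
    measurableSet_le measurable_const hFmeas
  have key : μ {ω | -t ≤ ∑ i, σ * γ i ω * ζ i ω / (lam + σ ^ 2 * γ i ω ^ 2)}
      = P {p | -t ≤ F p} := by
    have hts : {ω | -t ≤ ∑ i, σ * γ i ω * ζ i ω / (lam + σ ^ 2 * γ i ω ^ 2)}
        = T' ⁻¹' {p | -t ≤ F p} := rfl
    rw [hts, ← Measure.map_apply hT'meas hset, hmapT']
  rw [key]
  -- Chernoff
  set X : (Fin n → ℝ) × (Fin n → ℝ) → ℝ := fun p => -F p with hXdef
  set K : ℝ := s * (1/(2*Real.sqrt lam)) with hKdef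
  have hK0 : 0 ≤ K := by positivity
  have hXexp_meas : Measurable fun p => rexp (s * X p) :=
    ((hFmeas.neg).const_mul s).exp
  have hptbound : ∀ p : (Fin n → ℝ) × (Fin n → ℝ),
      rexp (s * X p) ≤ ∏ i, rexp (K * |p.2 i|) := by
    intro p
    rw [← Real.exp_sum]
    apply Real.exp_le_exp.mpr
    have h1 : s * X p = ∑ i, s * (-(σ * p.1 i * p.2 i / (lam + σ^2 * p.1 i ^ 2))) := by
      rw [hXdef, hFdef]
      simp only [← Finset.sum_neg_distrib, Finset.mul_sum]
    rw [h1]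
    refine Finset.sum_le_sum fun i _ => ?_
    have h4 : σ * p.1 i * p.2 i / (lam + σ^2 * p.1 i ^ 2)
        = (σ * p.1 i / (lam + σ^2 * p.1 i ^ 2)) * p.2 i := by ring
    have h3 : -(σ * p.1 i * p.2 i / (lam + σ^2 * p.1 i ^ 2)) ≤ (1/(2*Real.sqrt lam)) * |p.2 i| := by
      rw [h4]
      calc -((σ * p.1 i / (lam + σ^2 * p.1 i ^ 2)) * p.2 i)
          ≤ |(σ * p.1 i / (lam + σ^2 * p.1 i ^ 2)) * p.2 i| := neg_le_abs _
        _ = |σ * p.1 i / (lam + σ^2 * p.1 i ^ 2)| * |p.2 i| := abs_mul _ _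
        _ ≤ (1/(2*Real.sqrt lam)) * |p.2 i| := by
            exact mul_le_mul_of_nonneg_right (habs (p.1 i)) (abs_nonneg _)
    calc s * (-(σ * p.1 i * p.2 i / (lam + σ^2 * p.1 i ^ 2)))
        ≤ s * ((1/(2*Real.sqrt lam)) * |p.2 i|) := mul_le_mul_of_nonneg_left h3 hs0
      _ = K * |p.2 i| := by rw [hKdef]; ring
  have h_int : Integrable (fun p => rexp (s * X p)) P := by
    have hfi : ∀ i : Fin n, Integrable (fun y : ℝ => rexp (K * |y|)) g := by
      intro i
      refine Integrable.mono' ((grt_integrable_exp_mul_gaussian K).add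
        (grt_integrable_exp_mul_gaussian (-K))) ?_ (Filter.Eventually.of_forall fun y => ?_)
      · exact (((measurable_const.mul measurable_abs).exp).aestronglyMeasurable)
      · simp only [Pi.add_apply]
        rw [Real.norm_eq_abs, Real.abs_exp]
        rcases abs_cases y with ⟨hy, _⟩ | ⟨hy, _⟩
        · rw [hy]
          have : 0 < rexp (-K * y) := Real.exp_pos _
          linarith [Real.exp_le_exp.mpr (le_refl (K * y))]
        · rw [hy]
          have : 0 < rexp (K * y) := Real.exp_pos _
          have h5 : rexp (K * -y) = rexp (-K * y) := by ring_nf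
          linarith [h5.le]
    have h1 : Integrable (fun b : Fin n → ℝ => ∏ i, rexp (K * |b i|)) pm :=
      grt_integrable_pi_prod g _ hfi
    have h2 : Measure.map Prod.snd P = pm := by
      rw [hPdef, Measure.map_snd_prod, measure_univ, one_smul]
    have h3 : Integrable ((fun b : Fin n → ℝ => ∏ i, rexp (K * |b i|)) ∘ Prod.snd) P := by
      have hm1 : AEStronglyMeasurable (fun b : Fin n → ℝ => ∏ i, rexp (K * |b i|))
          (Measure.map Prod.snd P) := by
        rw [h2]; exact h1.aestronglyMeasurable
      have h4 : Integrable (fun b : Fin n → ℝ => ∏ i, rexp (K * |b i|))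
          (Measure.map Prod.snd P) := by
        rw [h2]; exact h1
      exact (integrable_map_measure hm1 measurable_snd.aemeasurable).mp h4
    refine Integrable.mono' h3 hXexp_meas.aestronglyMeasurable
      (Filter.Eventually.of_forall fun p => ?_)
    rw [Real.norm_eq_abs, Real.abs_exp]
    exact hptbound p
  have hmgf : mgf X P s ≤ rexp (s^2 * n / (8*lam)) := by
    have hm : mgf X P s = ∫ p, rexp (s * X p) ∂P := rfl
    rw [hm, hPdef, MeasureTheory.integral_prod _ (by rwa [← hPdef])]
    refine grt_integral_le_const pm _ _ (Real.exp_nonneg _) fun a => ?_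
    have heq : ∀ b : Fin n → ℝ, rexp (s * X (a, b))
        = ∏ i, rexp ((-(s * (σ * a i / (lam + σ^2 * a i ^ 2)))) * b i) := by
      intro b
      rw [← Real.exp_sum]
      congr 1
      rw [hXdef, hFdef]
      simp only [← Finset.sum_neg_distrib, Finset.mul_sum]
      exact Finset.sum_congr rfl fun i _ => by ring
    calc ∫ b, rexp (s * X (a, b)) ∂pm
        = ∫ b, ∏ i, rexp ((-(s * (σ * a i / (lam + σ^2 * a i ^ 2)))) * b i) ∂pm :=
          integral_congr_ae (Filter.Eventually.of_forall heq)
      _ = ∏ i, ∫ y, rexp ((-(s * (σ * a i / (lam + σ^2 * a i ^ 2)))) * y) ∂g := by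
          rw [hpmdef]
          exact grt_integral_pi_prod g (fun i y => rexp ((-(s * (σ * a i / (lam + σ^2 * a i ^ 2)))) * y))
      _ = ∏ i, rexp ((-(s * (σ * a i / (lam + σ^2 * a i ^ 2))))^2 / 2) :=
          Finset.prod_congr rfl fun i _ => grt_integral_exp_mul_gaussian _
      _ ≤ rexp (s^2 * n / (8*lam)) := by
          rw [← Real.exp_sum]
          apply Real.exp_le_exp.mpr
          calc ∑ i : Fin n, (-(s * (σ * a i / (lam + σ^2 * a i ^ 2))))^2 / 2
              ≤ ∑ _i : Fin n, s^2/(8*lam) := by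
                refine Finset.sum_le_sum fun i _ => ?_
                have h6 := hc2 (a i)
                have h8 : (-(s * (σ * a i / (lam + σ^2 * a i ^ 2))))^2
                    = s^2 * (σ * a i / (lam + σ^2 * a i ^ 2))^2 := by ring
                rw [h8, div_le_div_iff₀ (by norm_num : (0:ℝ) < 2) (by positivity : (0:ℝ) < 8*lam)]
                have hcl : (σ * a i / (lam + σ^2 * a i ^ 2))^2 * (4*lam) ≤ 1 :=
                  (le_div_iff₀ (by positivity)).mp h6
                nlinarith [mul_le_mul_of_nonneg_left hcl (sq_nonneg s)]
            _ = n * (s^2/(8*lam)) := by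
                rw [Finset.sum_const, Finset.card_univ, Fintype.card_fin, nsmul_eq_mul]
            _ = s^2 * n / (8*lam) := by ring
  have hst : s * t = 8*A*(n:ℝ)*Real.sqrt lam := by
    have h7 : s * t = 4 * q^2 * (n:ℝ) * r^2 := by
      rw [hsdef, htdef]
      field_simp
    rw [h7, hq2, hr2]
    ring
  have hs2 : s^2 * n / (8*lam) = 4*A*(n:ℝ)*Real.sqrt lam := by
    have h8 : s^2 = 16 * q^2 * (lam * r^2) := by
      rw [hsdef]
      rw [show (4 * q * r^3)^2 = 16 * q^2 * (r^4 * r^2) by ring, hr4]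
    rw [h8, hq2, hr2]
    field_simp
    ring
  have hcher : (P {p | t ≤ X p}).toReal ≤ rexp (-(A*(n:ℝ)*Real.sqrt lam)) := by
    calc (P {p | t ≤ X p}).toReal ≤ rexp (-s*t) * mgf X P s :=
          measure_ge_le_exp_mul_mgf t hs0 h_int
      _ ≤ rexp (-s*t) * rexp (s^2 * n/(8*lam)) :=
          mul_le_mul_of_nonneg_left hmgf (Real.exp_nonneg _)
      _ = rexp (-(s*t) + s^2 * n/(8*lam)) := by rw [← Real.exp_add]; ring_nf
      _ ≤ rexp (-(A*(n:ℝ)*Real.sqrt lam)) := by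
          apply Real.exp_le_exp.mpr
          rw [hst, hs2]
          have hnn : 0 ≤ A*(n:ℝ)*Real.sqrt lam := by positivity
          linarith
  -- assemble
  have h5 : P ({p | -t ≤ F p}ᶜ) ≤ ENNReal.ofReal (rexp (-(A*(n:ℝ)*Real.sqrt lam))) := by
    have hsub : {p : (Fin n → ℝ) × (Fin n → ℝ) | -t ≤ F p}ᶜ ⊆ {p | t ≤ X p} := by
      intro p hp
      simp only [Set.mem_compl_iff, Set.mem_setOf_eq, not_le] at hp ⊢
      show t ≤ -F p
      linarith
    calc P ({p | -t ≤ F p}ᶜ) ≤ P {p | t ≤ X p} := measure_mono hsub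
      _ = ENNReal.ofReal ((P {p | t ≤ X p}).toReal) :=
          (ENNReal.ofReal_toReal (measure_ne_top P _)).symm
      _ ≤ ENNReal.ofReal (rexp (-(A*(n:ℝ)*Real.sqrt lam))) := ENNReal.ofReal_le_ofReal hcher
  calc ENNReal.ofReal (1 - rexp (-(A*(n:ℝ)*Real.sqrt lam)))
      = 1 - ENNReal.ofReal (rexp (-(A*(n:ℝ)*Real.sqrt lam))) := by
        rw [ENNReal.ofReal_sub _ (Real.exp_nonneg _), ENNReal.ofReal_one]
    _ ≤ 1 - P ({p | -t ≤ F p}ᶜ) := tsub_le_tsub_left h5 1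
    _ = P {p | -t ≤ F p} := by
        rw [prob_compl_eq_one_sub hset, ENNReal.sub_sub_cancel ENNReal.one_ne_top prob_le_one]

end
end

section
/- Let θ₁, θ₂ be identically distributed real-valued continuous random variables taking values in Θ ⊆ ℝ, let y = g(θ, ε) be an observation from a model parameterized by θ (g measurable, ε a random variable independent of θ) such that Law(y | θ) has a Lebesgue density for every θ ∈ Θ, and let θ̂(y) be any estimator. Then for any coupling Π of (θ₁, θ₂): E_{θ, y}[(θ̂(y) − θ)²] ≥ (1/4)·E_{(θ₁,θ₂)~Π}[(θ₁ − θ₂)²·max(0, 1 − √(2·KL(Law(y | θ₁) ‖ Law(y | θ₂))))]. -/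
open MeasureTheory ProbabilityTheory Real Matrix
open scoped ENNReal NNReal BigOperators RealInnerProductSpace

noncomputable section

open Classical in
/-- The Kullback–Leibler divergence `KL(P ‖ Q)` (as a real number; junk value `0` when
it is not defined/finite), via the log-likelihood ratio. -/
def klDivReal (P Q : Measure ℝ) : ℝ :=
  if P ≪ Q ∧ Integrable (llr P Q) P then ∫ x, llr P Q x ∂P else 0

/-- `KL(P ‖ Q)` is finite (absolutely continuous with integrable log-likelihood ratio). -/
def KLFinite (P Q : Measure ℝ) : Prop := P ≪ Q ∧ Integrable (llr P Q) P

open Classical in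
/-- The factor `max(0, 1 - √(2 KL(P ‖ Q)))`, interpreted as `0` when `KL(P ‖ Q) = ∞`. -/
def klTerm (P Q : Measure ℝ) : ℝ :=
  if KLFinite P Q then max 0 (1 - Real.sqrt (2 * klDivReal P Q)) else 0

lemma log_lower {t : ℝ} (h0 : 0 < t) (h1 : t ≤ 1) : (t - t⁻¹) / 2 ≤ Real.log t := by
  have hs : (0:ℝ) ≤ -Real.log t := by
    have := Real.log_nonpos h0.le h1; linarith
  have hsinh : -Real.log t ≤ Real.sinh (-Real.log t) := Real.self_le_sinh_iff.mpr hs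
  have h2 : Real.sinh (-Real.log t) = (t⁻¹ - t) / 2 := by
    rw [Real.sinh_eq, Real.exp_neg, Real.exp_log h0, neg_neg, Real.exp_log h0]
  rw [h2] at hsinh; linarith

lemma sq_max_le {t : ℝ} (ht : 0 ≤ t) :
    (max 0 (1 - t)) ^ 2 ≤ 2 * (t * Real.log t - t + 1) := by
  rcases eq_or_lt_of_le ht with h | h
  · simp [← h]
  rcases le_or_gt t 1 with h1 | h1
  · have hlog := log_lower h h1
    have hmax : max 0 (1 - t) = 1 - t := max_eq_right (by linarith)
    have ht' : t⁻¹ * t = 1 := inv_mul_cancel₀ h.ne'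
    rw [hmax]
    nlinarith [mul_le_mul_of_nonneg_left hlog h.le]
  · have hmax : max 0 (1 - t) = 0 := max_eq_left (by linarith)
    have hlog : Real.log t⁻¹ ≤ t⁻¹ - 1 := Real.log_le_sub_one_of_pos (by positivity)
    rw [Real.log_inv] at hlog
    have ht' : t⁻¹ * t = 1 := inv_mul_cancel₀ h.ne'
    rw [hmax]
    nlinarith [mul_le_mul_of_nonneg_left hlog h.le]

lemma klTerm_le_inf (P Q : Measure ℝ) [IsProbabilityMeasure P] [IsProbabilityMeasure Q]
    (hPQ : P ≪ Q) (hint : Integrable (llr P Q) P) :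
    ENNReal.ofReal (klTerm P Q) ≤
      Q.withDensity (fun x => min (P.rnDeriv Q x) 1) Set.univ := by
  set g : ℝ → ℝ := fun x => (P.rnDeriv Q x).toReal with hg
  have hg_meas : Measurable g := (Measure.measurable_rnDeriv P Q).ennreal_toReal
  have hfin : ∀ᵐ x ∂Q, P.rnDeriv Q x < ∞ := Measure.rnDeriv_lt_top P Q
  have hνuniv : Q.withDensity (fun x => min (P.rnDeriv Q x) 1) Set.univ
      = ∫⁻ x, min (P.rnDeriv Q x) 1 ∂Q := by
    rw [withDensity_apply _ MeasurableSet.univ, Measure.restrict_univ]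
  have hν_le_one : Q.withDensity (fun x => min (P.rnDeriv Q x) 1) Set.univ ≤ 1 := by
    rw [hνuniv]
    calc ∫⁻ x, min (P.rnDeriv Q x) 1 ∂Q ≤ ∫⁻ _, 1 ∂Q := lintegral_mono fun x => min_le_right _ _
    _ = 1 := by simp
  have hν_ne_top : Q.withDensity (fun x => min (P.rnDeriv Q x) 1) Set.univ ≠ ∞ :=
    (lt_of_le_of_lt hν_le_one ENNReal.one_lt_top).ne
  set m : ℝ := (Q.withDensity (fun x => min (P.rnDeriv Q x) 1) Set.univ).toReal with hmdef
  have hm : m = ∫ x, min (g x) 1 ∂Q := by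
    rw [hmdef, hνuniv, ← integral_toReal ((Measure.measurable_rnDeriv P Q).min measurable_const).aemeasurable
      (hfin.mono fun x hx => lt_of_le_of_lt (min_le_right _ _) ENNReal.one_lt_top)]
    refine integral_congr_ae (hfin.mono fun x hx => ?_)
    show ((P.rnDeriv Q x) ⊓ 1).toReal = g x ⊓ 1
    rw [ENNReal.toReal_min hx.ne ENNReal.one_ne_top, ENNReal.toReal_one]
  set u : ℝ → ℝ := fun x => max 0 (1 - g x) with hu
  have hu_eq : ∀ x, u x = 1 - min (g x) 1 := by
    intro x
    rcases le_total (g x) 1 with h | h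
    · rw [hu]; simp only [min_eq_left h, max_eq_right (by linarith : (0:ℝ) ≤ 1 - g x)]
    · rw [hu]; simp only [min_eq_right h, max_eq_left (by linarith : 1 - g x ≤ (0:ℝ))]; ring
  have hu_meas : Measurable u := measurable_const.max (measurable_const.sub hg_meas)
  have hu_bdd : ∀ x, ‖u x‖ ≤ 1 := by
    intro x
    rw [Real.norm_eq_abs, abs_of_nonneg (le_max_left _ _)]
    have hg0 : (0:ℝ) ≤ g x := ENNReal.toReal_nonneg
    exact max_le one_pos.le (by linarith)
  have hu_mem : MemLp u 2 Q :=
    MemLp.of_bound hu_meas.aestronglyMeasurable 1 (ae_of_all _ hu_bdd)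
  have hmin_int : Integrable (fun x => min (g x) 1) Q := by
    refine Integrable.mono' (integrable_const 1) (hg_meas.min measurable_const).aestronglyMeasurable
      (ae_of_all _ fun x => ?_)
    rw [Real.norm_eq_abs, abs_of_nonneg (le_min ENNReal.toReal_nonneg one_pos.le)]
    exact min_le_right _ _
  have hint_u : ∫ x, u x ∂Q = 1 - m := by
    have heq : (fun x => u x) = fun x => 1 - min (g x) 1 := funext hu_eq
    rw [hm, heq, integral_sub (integrable_const 1) hmin_int]
    simp
  have hvar : (∫ x, u x ∂Q) ^ 2 ≤ ∫ x, u x ^ 2 ∂Q := by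
    have h := variance_nonneg u Q
    rw [variance_eq_sub hu_mem] at h
    simpa using h
  -- KL identities
  set KL : ℝ := ∫ x, llr P Q x ∂P with hKL
  have h_glog_int : Integrable (fun x => g x * Real.log (g x)) Q := by
    have := (integrable_rnDeriv_smul_iff (f := llr P Q) hPQ).mpr hint
    simpa [llr, smul_eq_mul, g] using this
  have hKL_eq : KL = ∫ x, g x * Real.log (g x) ∂Q := by
    rw [hKL, ← integral_rnDeriv_smul (f := llr P Q) hPQ]
    simp [llr, smul_eq_mul, g]
  have h_gint : Integrable g Q := Measure.integrable_toReal_rnDeriv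
  have h_gval : ∫ x, g x ∂Q = 1 := by
    rw [hg]; rw [Measure.integral_toReal_rnDeriv hPQ]; simp
  have hsq_int : Integrable (fun x => u x ^ 2) Q := by
    simpa [sq] using hu_mem.integrable_sq
  have h2 : ∫ x, u x ^ 2 ∂Q ≤ 2 * KL := by
    have hrhs_int : Integrable (fun x => 2 * (g x * Real.log (g x) - g x + 1)) Q :=
      (((h_glog_int.sub h_gint).add (integrable_const 1)).const_mul 2)
    calc ∫ x, u x ^ 2 ∂Q ≤ ∫ x, 2 * (g x * Real.log (g x) - g x + 1) ∂Q :=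
          integral_mono hsq_int hrhs_int fun x => sq_max_le ENNReal.toReal_nonneg
    _ = 2 * (∫ x, g x * Real.log (g x) ∂Q - ∫ x, g x ∂Q + 1) := by
          have hA : Integrable (fun x => g x * Real.log (g x) - g x) Q := h_glog_int.sub h_gint
          rw [integral_const_mul, integral_add hA (integrable_const 1),
            integral_sub h_glog_int h_gint]
          simp
    _ = 2 * KL := by rw [hKL_eq, h_gval]; ring
  have hu_nonneg : 0 ≤ ∫ x, u x ∂Q := integral_nonneg fun x => le_max_left _ _
  have hfinal : 1 - m ≤ Real.sqrt (2 * KL) := by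
    rw [← hint_u]
    calc ∫ x, u x ∂Q = Real.sqrt ((∫ x, u x ∂Q) ^ 2) := (Real.sqrt_sq hu_nonneg).symm
    _ ≤ Real.sqrt (2 * KL) := Real.sqrt_le_sqrt (le_trans hvar h2)
  have hklterm : klTerm P Q = max 0 (1 - Real.sqrt (2 * KL)) := by
    rw [klTerm, if_pos ⟨hPQ, hint⟩, klDivReal, if_pos ⟨hPQ, hint⟩]
  have : klTerm P Q ≤ m := by
    rw [hklterm]
    exact max_le ENNReal.toReal_nonneg (by linarith)
  calc ENNReal.ofReal (klTerm P Q) ≤ ENNReal.ofReal m := ENNReal.ofReal_le_ofReal this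
  _ = _ := ENNReal.ofReal_toReal hν_ne_top

lemma risk_bound (P Q : Measure ℝ) [IsProbabilityMeasure P] [IsProbabilityMeasure Q]
    (a b : ℝ) (est : ℝ → ℝ) (hest : Measurable est) :
    ENNReal.ofReal ((a - b) ^ 2 * klTerm P Q) ≤
      2 * ((∫⁻ y, ENNReal.ofReal ((est y - a) ^ 2) ∂P) +
        ∫⁻ y, ENNReal.ofReal ((est y - b) ^ 2) ∂Q) := by
  by_cases hKL : KLFinite P Q
  · obtain ⟨hPQ, hint⟩ := hKL
    set ν := Q.withDensity (fun x => min (P.rnDeriv Q x) 1) with hν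
    have hν_le_P : ν ≤ P := by
      calc ν ≤ Q.withDensity (P.rnDeriv Q) :=
            withDensity_mono (ae_of_all _ fun x => min_le_left _ _)
      _ = P := Measure.withDensity_rnDeriv_eq P Q hPQ
    have hν_le_Q : ν ≤ Q := by
      calc ν ≤ Q.withDensity (fun _ => 1) :=
            withDensity_mono (ae_of_all _ fun x => min_le_right _ _)
      _ = Q := by rw [withDensity_const, one_smul]
    have hma : Measurable fun y => ENNReal.ofReal ((est y - a) ^ 2) :=
      ((hest.sub measurable_const).pow_const 2).ennreal_ofReal
    have key : ENNReal.ofReal ((a - b) ^ 2 / 2) * ν Set.univ ≤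
        (∫⁻ y, ENNReal.ofReal ((est y - a) ^ 2) ∂P) +
          ∫⁻ y, ENNReal.ofReal ((est y - b) ^ 2) ∂Q := by
      calc ENNReal.ofReal ((a - b) ^ 2 / 2) * ν Set.univ
          = ∫⁻ _, ENNReal.ofReal ((a - b) ^ 2 / 2) ∂ν := (lintegral_const _).symm
      _ ≤ ∫⁻ y, (ENNReal.ofReal ((est y - a) ^ 2) + ENNReal.ofReal ((est y - b) ^ 2)) ∂ν := by
          refine lintegral_mono fun y => ?_
          rw [← ENNReal.ofReal_add (sq_nonneg _) (sq_nonneg _)]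
          exact ENNReal.ofReal_le_ofReal (by nlinarith [sq_nonneg (est y - a + (est y - b)), sq_nonneg (a - b)])
      _ = (∫⁻ y, ENNReal.ofReal ((est y - a) ^ 2) ∂ν) +
            ∫⁻ y, ENNReal.ofReal ((est y - b) ^ 2) ∂ν := lintegral_add_left hma _
      _ ≤ _ := add_le_add (lintegral_mono' hν_le_P le_rfl) (lintegral_mono' hν_le_Q le_rfl)
    have hk := klTerm_le_inf P Q hPQ hint
    calc ENNReal.ofReal ((a - b) ^ 2 * klTerm P Q)
        = ENNReal.ofReal ((a - b) ^ 2) * ENNReal.ofReal (klTerm P Q) :=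
          ENNReal.ofReal_mul (sq_nonneg _)
    _ ≤ ENNReal.ofReal ((a - b) ^ 2) * ν Set.univ := mul_le_mul_right hk _
    _ = 2 * (ENNReal.ofReal ((a - b) ^ 2 / 2) * ν Set.univ) := by
        rw [← mul_assoc]
        congr 1
        rw [show (2 : ℝ≥0∞) = ENNReal.ofReal 2 by simp,
          ← ENNReal.ofReal_mul (by norm_num)]
        congr 1
        ring
    _ ≤ 2 * _ := mul_le_mul_right key _
  · have h0 : klTerm P Q = 0 := by rw [klTerm, if_neg hKL]
    simp [h0]


/-- **Lemma (Lower bounding the expected risk by a coupling).** Let `θ₁, θ₂` be identically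
distributed continuous real random variables, and let the observation `y` given `θ = t`
be drawn from `κ t`, a Markov kernel whose values have Lebesgue densities (this encodes
`y = g(θ, ε)` with `Law(y | θ)` having a density). Then for any estimator `θ̂` and any
coupling `(θ₁, θ₂)` (i.e. any pair of identically-distributed random variables on a common
probability space),
`E_{θ,y}[(θ̂(y) - θ)²] ≥ (1/4)·E[(θ₁ - θ₂)²·max(0, 1 - √(2 KL(Law(y|θ₁) ‖ Law(y|θ₂))))]`,
where the factor is interpreted as `0` when the KL divergence is infinite. -/
theorem expected_risk_coupling_lower_bound
    {Ω : Type} [MeasurableSpace Ω] (μ : Measure Ω) [IsProbabilityMeasure μ]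
    (θ₁ θ₂ : Ω → ℝ) (hθ₁ : Measurable θ₁) (hθ₂ : Measurable θ₂)
    (hident : Measure.map θ₁ μ = Measure.map θ₂ μ)
    (hcont : Measure.map θ₁ μ ≪ MeasureTheory.volume)
    (κ : ProbabilityTheory.Kernel ℝ ℝ) [IsMarkovKernel κ]
    (hdensity : ∀ t : ℝ, κ t ≪ MeasureTheory.volume)
    (est : ℝ → ℝ) (hest : Measurable est) :
    ENNReal.ofReal (4 : ℝ)⁻¹ *
        ∫⁻ ω, ENNReal.ofReal ((θ₁ ω - θ₂ ω) ^ 2 * klTerm (κ (θ₁ ω)) (κ (θ₂ ω))) ∂μ ≤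
      ∫⁻ ω, ∫⁻ y, ENNReal.ofReal ((est y - θ₁ ω) ^ 2) ∂(κ (θ₁ ω)) ∂μ := by
  set R : ℝ → ℝ≥0∞ := fun t => ∫⁻ y, ENNReal.ofReal ((est y - t) ^ 2) ∂(κ t) with hR
  have hR_meas : Measurable R :=
    Measurable.lintegral_kernel_prod_right'
      ((((hest.comp measurable_snd).sub measurable_fst).pow_const 2).ennreal_ofReal)
  have hswap : ∫⁻ ω, R (θ₁ ω) ∂μ = ∫⁻ ω, R (θ₂ ω) ∂μ := by
    rw [← lintegral_map hR_meas hθ₁, ← lintegral_map hR_meas hθ₂, hident]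
  have hptwise : ∀ ω, ENNReal.ofReal ((θ₁ ω - θ₂ ω) ^ 2 * klTerm (κ (θ₁ ω)) (κ (θ₂ ω))) ≤
      2 * (R (θ₁ ω) + R (θ₂ ω)) :=
    fun ω => risk_bound (κ (θ₁ ω)) (κ (θ₂ ω)) (θ₁ ω) (θ₂ ω) est hest
  have hL : ∫⁻ ω, ENNReal.ofReal ((θ₁ ω - θ₂ ω) ^ 2 * klTerm (κ (θ₁ ω)) (κ (θ₂ ω))) ∂μ ≤
      4 * ∫⁻ ω, R (θ₁ ω) ∂μ := by
    calc ∫⁻ ω, ENNReal.ofReal ((θ₁ ω - θ₂ ω) ^ 2 * klTerm (κ (θ₁ ω)) (κ (θ₂ ω))) ∂μ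
        ≤ ∫⁻ ω, 2 * (R (θ₁ ω) + R (θ₂ ω)) ∂μ := lintegral_mono hptwise
    _ = 2 * ((∫⁻ ω, R (θ₁ ω) ∂μ) + ∫⁻ ω, R (θ₂ ω) ∂μ) := by
        have h1 : Measurable fun ω => R (θ₁ ω) := hR_meas.comp hθ₁
        have h2 : Measurable fun ω => R (θ₂ ω) := hR_meas.comp hθ₂
        rw [lintegral_const_mul 2 (show Measurable fun ω => R (θ₁ ω) + R (θ₂ ω) from h1.add h2)]
        congr 1
        exact lintegral_add_left h1 _
    _ = 4 * ∫⁻ ω, R (θ₁ ω) ∂μ := by rw [← hswap]; ring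
  calc ENNReal.ofReal (4 : ℝ)⁻¹ *
        ∫⁻ ω, ENNReal.ofReal ((θ₁ ω - θ₂ ω) ^ 2 * klTerm (κ (θ₁ ω)) (κ (θ₂ ω))) ∂μ
      ≤ ENNReal.ofReal (4 : ℝ)⁻¹ * (4 * ∫⁻ ω, R (θ₁ ω) ∂μ) := mul_le_mul_right hL _
  _ = ∫⁻ ω, R (θ₁ ω) ∂μ := by
      rw [ENNReal.ofReal_inv_of_pos (by norm_num), ← mul_assoc]
      rw [show ENNReal.ofReal (4:ℝ) = (4:ℝ≥0∞) by simp]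
      rw [ENNReal.inv_mul_cancel (by norm_num) (by norm_num), one_mul]


end
end
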